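/- Let 1 ≤ l < k ≤ n be integers and let H > h ≥ 0 be real numbers; set ℋ := (k−l)/(2(H−h)). Then for every α > 0: (1) for each s > 0 there exists a unique real number v_α(s) > 1 satisfying (v_α(s)^{k−l} − 1) v_α(s)^{2ℋh} = α s^{−ℋ}; (2) the function s ↦ v_α(s) is differentiable on (0,∞) and satisfies (v_α'/v_α)(H v_α^{2ℋH} − h v_α^{2ℋh}) = −α/(2 s^{1+ℋ}), and in particular v_α'(s) < 0 for all s > 0; (3) v_α(s) → 1 as s → ∞, and v_α(s) − 1 = O(s^{−ℋ}) as s → ∞; (4) for each fixed s > 0, α ↦ v_α(s) is strictly increasing, with ∂v_α(s)/∂α = s^{−ℋ} / (2ℋ(H v_α^{2ℋH−1} − h v_α^{2ℋh−1})) > 0. -/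

import Mathlib

open scoped BigOperators
open Filter MeasureTheory Set

noncomputable section

/-- Euclidean `n`-space `ℝⁿ`. -/
abbrev En (n : ℕ) : Type := EuclideanSpace ℝ (Fin n)

/-- `σ_k(a)`: the `k`-th elementary symmetric polynomial of `a : Fin n → ℝ`. -/
def esym (n k : ℕ) (a : Fin n → ℝ) : ℝ :=
  ∑ t ∈ Finset.powersetCard k (Finset.univ : Finset (Fin n)), ∏ i ∈ t, a i

/-- `σ_{k;i}(a) := σ_k(a)|_{a_i = 0}`. -/
def esymDel (n k : ℕ) (a : Fin n → ℝ) (i : Fin n) : ℝ :=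
  esym n k (Function.update a i 0)

/-- `H_k(a) = max_{1 ≤ i ≤ n} σ_{k-1;i}(a) a_i / σ_k(a)`. -/
def Hfun (n k : ℕ) (a : Fin n → ℝ) : ℝ :=
  ⨆ i : Fin n, esymDel n (k - 1) a i * a i / esym n k a

/-- `h_l(a) = min_{1 ≤ i ≤ n} σ_{l-1;i}(a) a_i / σ_l(a)`, with `h_0 = 0`. -/
def hfun (n l : ℕ) (a : Fin n → ℝ) : ℝ :=
  if l = 0 then 0 else ⨅ i : Fin n, esymDel n (l - 1) a i * a i / esym n l a

/-- The Hessian matrix `D²u(x)` of a function `u : ℝⁿ → ℝ`. -/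
def hess {n : ℕ} (u : En n → ℝ) (x : En n) : Matrix (Fin n) (Fin n) ℝ :=
  Matrix.of fun i j =>
    fderiv ℝ (fun y => fderiv ℝ u y (EuclideanSpace.single j 1)) x (EuclideanSpace.single i 1)

/-- `σ_k(λ(M))`: the `k`-th elementary symmetric function of the eigenvalues of `M`,
expressed via the coefficients of the characteristic polynomial. -/
def sigmaEig {n : ℕ} (k : ℕ) (M : Matrix (Fin n) (Fin n) ℝ) : ℝ :=
  (-1 : ℝ) ^ k * M.charpoly.coeff (n - k)

/-- The Hessian quotient operator `S_{k,l}(M) = σ_k(λ(M))/σ_l(λ(M))`. -/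
def Skl {n : ℕ} (k l : ℕ) (M : Matrix (Fin n) (Fin n) ℝ) : ℝ :=
  sigmaEig k M / sigmaEig l M

/-- The Garding cone `Γ_k = {λ : σ_j(λ) > 0, 1 ≤ j ≤ k}`. -/
def GammaCone (n k : ℕ) : Set (Fin n → ℝ) :=
  {lam | ∀ j : ℕ, 1 ≤ j → j ≤ k → 0 < esym n j lam}

/-- `ψ` is `k`-convex at `x`: the (symmetric) Hessian has eigenvalue vector in `closure Γ_k`. -/
def KConvexAt (n k : ℕ) (ψ : En n → ℝ) (x : En n) : Prop :=
  ∃ hsym : (hess ψ x).IsHermitian, hsym.eigenvalues ∈ closure (GammaCone n k)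

/-- Viscosity subsolution of `S_{k,l}(D²u) = 1` on `Ω`. -/
def ViscSubOn (n k l : ℕ) (Ω : Set (En n)) (u : En n → ℝ) : Prop :=
  UpperSemicontinuousOn u Ω ∧
  ∀ ψ : En n → ℝ, ContDiffOn ℝ 2 ψ Ω → (∀ x ∈ Ω, KConvexAt n k ψ x) →
    ∀ x₀ ∈ Ω, ψ x₀ = u x₀ → (∀ x ∈ Ω, u x ≤ ψ x) → 1 ≤ Skl k l (hess ψ x₀)

/-- Viscosity supersolution of `S_{k,l}(D²u) = 1` on `Ω`. -/
def ViscSupOn (n k l : ℕ) (Ω : Set (En n)) (u : En n → ℝ) : Prop :=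
  LowerSemicontinuousOn u Ω ∧
  ∀ ψ : En n → ℝ, ContDiffOn ℝ 2 ψ Ω → (∀ x ∈ Ω, KConvexAt n k ψ x) →
    ∀ x₀ ∈ Ω, ψ x₀ = u x₀ → (∀ x ∈ Ω, ψ x ≤ u x) → Skl k l (hess ψ x₀) ≤ 1

/-- Viscosity solution of the exterior Dirichlet problem
`S_{k,l}(D²u) = 1` in `ℝⁿ ∖ D̄`, `u = φ` on `∂D`, `u ∈ C⁰(ℝⁿ ∖ D)`. -/
def ExtViscSolution (n k l : ℕ) (D : Set (En n)) (φ u : En n → ℝ) : Prop :=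
  ContinuousOn u Dᶜ ∧
  ViscSubOn n k l (closure D)ᶜ u ∧
  ViscSupOn n k l (closure D)ᶜ u ∧
  ∀ x ∈ frontier D, u x = φ x

/-- A smooth, bounded, strictly convex open set. -/
structure SmoothStrictlyConvexDomain (n : ℕ) (D : Set (En n)) : Prop where
  isOpen : IsOpen D
  nonempty : D.Nonempty
  bounded : Bornology.IsBounded D
  strictConvex : StrictConvex ℝ D
  smoothBoundary : ∃ f : En n → ℝ, ContDiff ℝ (⊤ : ℕ∞) f ∧ D = {x | f x < 0} ∧
    ∀ x ∈ frontier D, fderiv ℝ f x ≠ 0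

/-- `½ xᵀ A x`. -/
def quadForm {n : ℕ} (A : Matrix (Fin n) (Fin n) ℝ) (x : En n) : ℝ :=
  (1 / 2) * ∑ i, ∑ j, A i j * x i * x j

/-- `s(x) = ½ ∑ a_i x_i²` (i.e. `½ xᵀAx` for `A = diag a`). -/
def sdiag {n : ℕ} (a : Fin n → ℝ) (x : En n) : ℝ :=
  (1 / 2) * ∑ i, a i * x i ^ 2

end

noncomputable section

/-- `ℋ = (k − l)/(2(H − h))`. -/
def calH (k l : ℕ) (H h : ℝ) : ℝ := ((k : ℝ) - l) / (2 * (H - h))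

/-- The defining property of the function `v_α`: for every `s > 0`, `v_α(s) > 1` and
`(v_α(s)^{k−l} − 1) v_α(s)^{2ℋh} = α s^{−ℋ}`. -/
def IsVsol (k l : ℕ) (H h α : ℝ) (v : ℝ → ℝ) : Prop :=
  ∀ s : ℝ, 0 < s → 1 < v s ∧
    (v s ^ (k - l) - 1) * v s ^ (2 * calH k l H h * h) = α * s ^ (-calH k l H h)

/-- `ω_α(x) = β + ∫_{s̄}^{½xᵀAx} v_α(t) dt` for `A = diag a`. -/
def omegaA {n : ℕ} (β sbar : ℝ) (v : ℝ → ℝ) (a : Fin n → ℝ) (x : En n) : ℝ :=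
  β + ∫ t in sbar..(sdiag a x), v t

end

noncomputable section

def Fm (p q v : ℝ) : ℝ := v ^ p - v ^ q

lemma Fm_one (p q : ℝ) : Fm p q 1 = 0 := by simp [Fm]

lemma hasDerivAt_Fm (p q : ℝ) {v : ℝ} (hv : 0 < v) :
    HasDerivAt (Fm p q) (p * v ^ (p - 1) - q * v ^ (q - 1)) v := by
  have h1 := Real.hasDerivAt_rpow_const (x := v) (p := p) (Or.inl hv.ne')
  have h2 := Real.hasDerivAt_rpow_const (x := v) (p := q) (Or.inl hv.ne')
  exact h1.sub h2

lemma Fm_deriv_pos {p q : ℝ} (hq : 0 ≤ q) (hpq : q < p) {v : ℝ} (hv : 1 ≤ v) :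
    0 < p * v ^ (p - 1) - q * v ^ (q - 1) := by
  have hv0 : (0:ℝ) < v := lt_of_lt_of_le one_pos hv
  have hY : (0:ℝ) < v ^ (q - 1) := Real.rpow_pos_of_pos hv0 _
  have hXY : v ^ (q - 1) ≤ v ^ (p - 1) :=
    Real.rpow_le_rpow_of_exponent_le hv (by linarith)
  nlinarith

lemma Fm_continuousOn (p q : ℝ) : ContinuousOn (Fm p q) (Ici 1) := fun v hv =>
  (hasDerivAt_Fm p q (lt_of_lt_of_le one_pos hv)).continuousAt.continuousWithinAt

lemma Fm_strictMonoOn {p q : ℝ} (hq : 0 ≤ q) (hpq : q < p) :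
    StrictMonoOn (Fm p q) (Ici 1) := by
  apply StrictMonoOn.mono (s := Ici 1) ?_ le_rfl
  apply strictMonoOn_of_deriv_pos (convex_Ici 1) (Fm_continuousOn p q)
  intro x hx
  rw [interior_Ici] at hx
  have hx1 : (1:ℝ) < x := hx
  rw [(hasDerivAt_Fm p q (lt_trans one_pos hx1)).deriv]
  exact Fm_deriv_pos hq hpq hx1.le

lemma Fm_ge {p q : ℝ} (hq : 0 ≤ q) (hp1 : q + 1 ≤ p) {v : ℝ} (hv : 1 ≤ v) :
    v - 1 ≤ Fm p q v := by
  have hv0 : (0:ℝ) < v := lt_of_lt_of_le one_pos hv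
  have key : Fm p q v = v ^ q * (v ^ (p - q) - 1) := by
    rw [mul_sub, ← Real.rpow_add hv0, mul_one, Fm]
    ring_nf
  have h1 : (1:ℝ) ≤ v ^ q := Real.one_le_rpow hv hq
  have h2 : v ≤ v ^ (p - q) := by
    calc v = v ^ (1:ℝ) := (Real.rpow_one v).symm
    _ ≤ v ^ (p - q) := Real.rpow_le_rpow_of_exponent_le hv (by linarith)
  nlinarith

lemma Fm_exists {p q : ℝ} (hq : 0 ≤ q) (hp1 : q + 1 ≤ p) {y : ℝ} (hy : 0 < y) :
    ∃ v, 1 < v ∧ Fm p q v = y := by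
  have h1 : (1:ℝ) ≤ y + 1 := by linarith
  have hmem : y ∈ Icc (Fm p q 1) (Fm p q (y + 1)) := by
    constructor
    · rw [Fm_one]; exact hy.le
    · have := Fm_ge hq hp1 (v := y + 1) h1
      linarith
  obtain ⟨v, hv, hFv⟩ := intermediate_value_Icc h1
    ((Fm_continuousOn p q).mono (Icc_subset_Ici_self)) hmem
  refine ⟨v, ?_, hFv⟩
  rcases eq_or_lt_of_le hv.1 with h | h
  · exfalso; rw [← h, Fm_one] at hFv; linarith
  · exact h

open Classical in
def GinvF (p q y : ℝ) : ℝ :=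
  if h : ∃ v, 1 < v ∧ Fm p q v = y then h.choose else 2

lemma GinvF_spec {p q y : ℝ} (h : ∃ v, 1 < v ∧ Fm p q v = y) :
    1 < GinvF p q y ∧ Fm p q (GinvF p q y) = y := by
  classical
  rw [GinvF, dif_pos h]
  exact h.choose_spec

lemma GinvF_eq {p q : ℝ} (hq : 0 ≤ q) (hpq : q < p) {v y : ℝ} (hv : 1 < v)
    (hF : Fm p q v = y) : GinvF p q y = v := by
  have h : ∃ v, 1 < v ∧ Fm p q v = y := ⟨v, hv, hF⟩
  obtain ⟨h1, h2⟩ := GinvF_spec h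
  exact (Fm_strictMonoOn hq hpq).injOn h1.le (le_of_lt hv) (h2.trans hF.symm)

lemma GinvF_pos_spec {p q : ℝ} (hq : 0 ≤ q) (hp1 : q + 1 ≤ p) {y : ℝ} (hy : 0 < y) :
    1 < GinvF p q y ∧ Fm p q (GinvF p q y) = y :=
  GinvF_spec (Fm_exists hq hp1 hy)

lemma GinvF_continuousAt {p q : ℝ} (hq : 0 ≤ q) (hp1 : q + 1 ≤ p) {y₀ : ℝ} (hy₀ : 0 < y₀) :
    ContinuousAt (GinvF p q) y₀ := by
  have hpq : q < p := by linarith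
  obtain ⟨hv₀, hF₀⟩ := GinvF_pos_spec hq hp1 hy₀
  set v₀ := GinvF p q y₀ with hv₀def
  rw [Metric.continuousAt_iff]
  intro ε hε
  set ε' := min ε ((v₀ - 1) / 2) with hε'def
  have hε' : 0 < ε' := lt_min hε (by linarith)
  have hε'2 : ε' ≤ (v₀ - 1) / 2 := min_le_right _ _
  have hlow : 1 < v₀ - ε' := by linarith
  have hmonlt1 : Fm p q (v₀ - ε') < y₀ := by
    rw [← hF₀]
    exact Fm_strictMonoOn hq hpq hlow.le hv₀.le (by linarith)
  have hmonlt2 : y₀ < Fm p q (v₀ + ε') := by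
    rw [← hF₀]
    exact Fm_strictMonoOn hq hpq hv₀.le (by linarith : (1:ℝ) ≤ v₀ + ε') (by linarith)
  have hFlow0 : 0 < Fm p q (v₀ - ε') := by
    have := Fm_strictMonoOn hq hpq (Set.mem_Ici.2 (le_refl (1:ℝ))) hlow.le hlow
    rw [Fm_one] at this; linarith
  refine ⟨min (y₀ - Fm p q (v₀ - ε')) (Fm p q (v₀ + ε') - y₀),
    lt_min (by linarith) (by linarith), ?_⟩
  intro y hy
  rw [Real.dist_eq] at hy ⊢
  have hy1 : Fm p q (v₀ - ε') < y := by
    have := abs_lt.1 hy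
    have := min_le_left (y₀ - Fm p q (v₀ - ε')) (Fm p q (v₀ + ε') - y₀)
    linarith [this]
  have hy2 : y < Fm p q (v₀ + ε') := by
    have h1 := abs_lt.1 hy
    have h2 := min_le_right (y₀ - Fm p q (v₀ - ε')) (Fm p q (v₀ + ε') - y₀)
    linarith
  have hypos : 0 < y := lt_trans hFlow0 hy1
  obtain ⟨hvy, hFy⟩ := GinvF_pos_spec hq hp1 hypos
  set v := GinvF p q y with hvdef
  have hb1 : v₀ - ε' < v := by
    by_contra hcon
    push_neg at hcon
    have := Fm_strictMonoOn hq hpq |>.monotoneOn hvy.le hlow.le hcon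
    rw [hFy] at this; linarith
  have hb2 : v < v₀ + ε' := by
    by_contra hcon
    push_neg at hcon
    have := Fm_strictMonoOn hq hpq |>.monotoneOn (by linarith : (1:ℝ) ≤ v₀ + ε') hvy.le hcon
    rw [hFy] at this; linarith
  have : |v - v₀| < ε' := abs_lt.2 ⟨by linarith, by linarith⟩
  exact lt_of_lt_of_le this (min_le_left _ _)

lemma GinvF_hasDerivAt {p q : ℝ} (hq : 0 ≤ q) (hp1 : q + 1 ≤ p) {y₀ : ℝ} (hy₀ : 0 < y₀) :
    HasDerivAt (GinvF p q)
      (p * GinvF p q y₀ ^ (p - 1) - q * GinvF p q y₀ ^ (q - 1))⁻¹ y₀ := by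
  have hpq : q < p := by linarith
  obtain ⟨hv₀, hF₀⟩ := GinvF_pos_spec hq hp1 hy₀
  apply HasDerivAt.of_local_left_inverse (GinvF_continuousAt hq hp1 hy₀)
    (hasDerivAt_Fm p q (lt_trans one_pos hv₀))
    (ne_of_gt (Fm_deriv_pos hq hpq hv₀.le))
  filter_upwards [Ioi_mem_nhds hy₀] with y hy
  exact (GinvF_pos_spec hq hp1 hy).2

lemma GinvF_lt {p q : ℝ} (hq : 0 ≤ q) (hp1 : q + 1 ≤ p) {y1 y2 : ℝ}
    (h1 : 0 < y1) (h12 : y1 < y2) : GinvF p q y1 < GinvF p q y2 := by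
  obtain ⟨a1, b1⟩ := GinvF_pos_spec hq hp1 h1
  obtain ⟨a2, b2⟩ := GinvF_pos_spec hq hp1 (lt_trans h1 h12)
  by_contra hcon
  push_neg at hcon
  have := (Fm_strictMonoOn hq (by linarith : q < p)).monotoneOn a2.le a1.le hcon
  rw [b1, b2] at this
  linarith


theorem v_aux (k l : ℕ) (hlk : l < k)
    (H h ℋ : ℝ) (hh : 0 ≤ h) (hHh : h < H)
    (hℋ : ℋ = ((k:ℝ) - l) / (2 * (H - h)))
    (V : ℝ → ℝ → ℝ)
    (hV : ∀ α : ℝ, 0 < α → ∀ s : ℝ, 0 < s → 1 < V α s ∧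
      (V α s ^ (k - l) - 1) * V α s ^ (2 * ℋ * h) = α * s ^ (-ℋ)) :
    ∀ α : ℝ, 0 < α →
      (∀ s : ℝ, 0 < s → ∃! v : ℝ, 1 < v ∧
        (v ^ (k - l) - 1) * v ^ (2 * ℋ * h) = α * s ^ (-ℋ)) ∧
      (∀ s : ℝ, 0 < s → ∃ d : ℝ, HasDerivAt (V α) d s ∧ d < 0 ∧
        d / V α s * (H * V α s ^ (2 * ℋ * H) - h * V α s ^ (2 * ℋ * h)) =
          -(α / (2 * s ^ (1 + ℋ)))) ∧
      (Tendsto (V α) atTop (nhds 1) ∧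
        ∃ C S : ℝ, 0 < C ∧ 0 < S ∧ ∀ s : ℝ, S ≤ s →
          |V α s - 1| ≤ C * s ^ (-ℋ)) ∧
      (∀ s : ℝ, 0 < s →
        StrictMonoOn (fun α' => V α' s) (Set.Ioi (0 : ℝ)) ∧
        HasDerivAt (fun α' => V α' s)
          (s ^ (-ℋ) /
            (2 * ℋ *
              (H * V α s ^ (2 * ℋ * H - 1) -
                h * V α s ^ (2 * ℋ * h - 1)))) α ∧
        0 < s ^ (-ℋ) /
          (2 * ℋ *
            (H * V α s ^ (2 * ℋ * H - 1) -
              h * V α s ^ (2 * ℋ * h - 1)))) := by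
  have hK1 : (1:ℝ) ≤ (k:ℝ) - l := by
    have : (l:ℝ) + 1 ≤ k := by exact_mod_cast hlk
    linarith
  have hHh' : 0 < H - h := sub_pos.2 hHh
  have hH0 : 0 < H := lt_of_le_of_lt hh hHh
  have hℋpos : 0 < ℋ := by rw [hℋ]; positivity
  set q : ℝ := 2 * ℋ * h with hqdef
  set p : ℝ := 2 * ℋ * H with hpdef
  have hq0 : 0 ≤ q := by rw [hqdef]; positivity
  have hpq : p - q = (k:ℝ) - l := by
    rw [hpdef, hqdef, hℋ]; field_simp
  have hp1 : q + 1 ≤ p := by linarith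
  have hqp : q < p := by linarith
  have hFm_eq : ∀ v : ℝ, 0 < v → (v ^ (k - l) - 1) * v ^ q = Fm p q v := by
    intro v hv
    have h1 : v ^ (k - l) = v ^ ((k:ℝ) - l) := by
      rw [← Real.rpow_natCast v (k - l)]
      congr 1
      push_cast [Nat.cast_sub hlk.le]
      ring
    rw [h1, Fm, sub_mul, one_mul, ← Real.rpow_add hv]
    rw [show (k:ℝ) - l + q = p by linarith]
  have hVG : ∀ β : ℝ, 0 < β → ∀ t : ℝ, 0 < t →
      V β t = GinvF p q (β * t ^ (-ℋ)) := by
    intro β hβ t ht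
    obtain ⟨h1, h2⟩ := hV β hβ t ht
    refine (GinvF_eq hq0 hqp h1 ?_).symm
    rw [← hFm_eq _ (lt_trans one_pos h1)]
    exact h2
  intro α hα
  refine ⟨?_, ?_, ?_, ?_⟩
  · -- Part (1)
    intro s hs
    have hy : 0 < α * s ^ (-ℋ) := mul_pos hα (Real.rpow_pos_of_pos hs _)
    obtain ⟨v, hv1, hvF⟩ := Fm_exists hq0 hp1 hy
    refine ⟨v, ⟨hv1, by rw [hFm_eq v (lt_trans one_pos hv1)]; exact hvF⟩, ?_⟩
    rintro w ⟨hw1, hwF⟩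
    rw [hFm_eq w (lt_trans one_pos hw1)] at hwF
    exact (Fm_strictMonoOn hq0 hqp).injOn hw1.le hv1.le (hwF.trans hvF.symm)
  · -- Part (2)
    intro s hs
    have hy : 0 < α * s ^ (-ℋ) := mul_pos hα (Real.rpow_pos_of_pos hs _)
    obtain ⟨hv1, _⟩ := hV α hα s hs
    set v := V α s with hvdef
    have hv0 : 0 < v := lt_trans one_pos hv1
    have hG := GinvF_hasDerivAt hq0 hp1 hy
    rw [← hVG α hα s hs, ← hvdef] at hG
    have hinner : HasDerivAt (fun t : ℝ => α * t ^ (-ℋ))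
        (α * (-ℋ * s ^ (-ℋ - 1))) s :=
      (Real.hasDerivAt_rpow_const (Or.inl hs.ne')).const_mul α
    have hcomp := hG.comp s hinner
    have hVd : HasDerivAt (V α)
        ((p * v ^ (p - 1) - q * v ^ (q - 1))⁻¹ * (α * (-ℋ * s ^ (-ℋ - 1)))) s := by
      refine hcomp.congr_of_eventuallyEq ?_
      filter_upwards [Ioi_mem_nhds hs] with t ht
      exact hVG α hα t ht
    have hF' : 0 < p * v ^ (p - 1) - q * v ^ (q - 1) := Fm_deriv_pos hq0 hqp hv1.le
    have hs1H : 0 < s ^ (1 + ℋ) := Real.rpow_pos_of_pos hs _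
    have hsH1 : 0 < s ^ (-ℋ - 1) := Real.rpow_pos_of_pos hs _
    refine ⟨_, hVd, ?_, ?_⟩
    · apply mul_neg_of_pos_of_neg (inv_pos.2 hF')
      apply mul_neg_of_pos_of_neg hα
      apply mul_neg_of_neg_of_pos (by linarith) hsH1
    · have hA : v ^ (p - 1) = v ^ p / v := by
        rw [Real.rpow_sub hv0, Real.rpow_one]
      have hB : v ^ (q - 1) = v ^ q / v := by
        rw [Real.rpow_sub hv0, Real.rpow_one]
      have hBp : 0 < v ^ q := Real.rpow_pos_of_pos hv0 _
      have hAB : v ^ q ≤ v ^ p := Real.rpow_le_rpow_of_exponent_le hv1.le hqp.le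
      have hD : 0 < H * v ^ p - h * v ^ q := by
        nlinarith [mul_le_mul_of_nonneg_left hAB hH0.le, mul_pos hHh' hBp]
      have hsneg : s ^ (-ℋ - 1) = (s ^ (1 + ℋ))⁻¹ := by
        rw [show -ℋ - 1 = -(1 + ℋ) by ring, Real.rpow_neg hs.le]
      have hF'eq : p * v ^ (p - 1) - q * v ^ (q - 1) =
          2 * ℋ * (H * v ^ p - h * v ^ q) / v := by
        rw [hA, hB, hpdef, hqdef]; field_simp
      rw [hF'eq, hsneg]
      field_simp
  · -- Part (3)
    constructor
    · apply tendsto_of_tendsto_of_tendsto_of_le_of_le'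
        (g := fun _ : ℝ => (1:ℝ)) (h := fun s : ℝ => 1 + α * s ^ (-ℋ))
        tendsto_const_nhds
      · have := ((tendsto_rpow_neg_atTop hℋpos).const_mul α).const_add 1
        simpa using this
      · filter_upwards [eventually_gt_atTop (0:ℝ)] with s hs
        exact (hV α hα s hs).1.le
      · filter_upwards [eventually_gt_atTop (0:ℝ)] with s hs
        obtain ⟨h1, h2⟩ := hV α hα s hs
        have hFv : Fm p q (V α s) = α * s ^ (-ℋ) := by
          rw [← hFm_eq _ (lt_trans one_pos h1)]; exact h2
        have := Fm_ge hq0 hp1 h1.le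
        linarith
    · refine ⟨α, 1, hα, one_pos, fun s hs => ?_⟩
      have hs0 : 0 < s := lt_of_lt_of_le one_pos hs
      obtain ⟨h1, h2⟩ := hV α hα s hs0
      have hFv : Fm p q (V α s) = α * s ^ (-ℋ) := by
        rw [← hFm_eq _ (lt_trans one_pos h1)]; exact h2
      have := Fm_ge hq0 hp1 h1.le
      rw [abs_of_nonneg (by linarith)]
      linarith
  · -- Part (4)
    intro s hs
    have hsH : 0 < s ^ (-ℋ) := Real.rpow_pos_of_pos hs _
    obtain ⟨hv1, _⟩ := hV α hα s hs
    set v := V α s with hvdef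
    have hv0 : 0 < v := lt_trans one_pos hv1
    have hX : 0 < v ^ (q - 1) := Real.rpow_pos_of_pos hv0 _
    have hXY : v ^ (q - 1) ≤ v ^ (p - 1) :=
      Real.rpow_le_rpow_of_exponent_le hv1.le (by linarith)
    have hE : 0 < H * v ^ (p - 1) - h * v ^ (q - 1) := by
      nlinarith [mul_le_mul_of_nonneg_left hXY hH0.le, mul_pos hHh' hX]
    have hEq : (p * v ^ (p - 1) - q * v ^ (q - 1))⁻¹ * s ^ (-ℋ) =
        s ^ (-ℋ) / (2 * ℋ * (H * v ^ (p - 1) - h * v ^ (q - 1))) := by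
      rw [show p * v ^ (p - 1) - q * v ^ (q - 1) =
        2 * ℋ * (H * v ^ (p - 1) - h * v ^ (q - 1)) by rw [hpdef, hqdef]; ring]
      ring
    refine ⟨?_, ?_, ?_⟩
    · intro a ha b hb hab
      simp only [mem_Ioi] at ha hb
      simp only [hVG a ha s hs, hVG b hb s hs]
      exact GinvF_lt hq0 hp1 (mul_pos ha hsH)
        (by exact mul_lt_mul_of_pos_right hab hsH)
    · have hy : 0 < α * s ^ (-ℋ) := mul_pos hα hsH
      have hG := GinvF_hasDerivAt hq0 hp1 hy
      rw [← hVG α hα s hs, ← hvdef] at hG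
      have hinner : HasDerivAt (fun β : ℝ => β * s ^ (-ℋ)) (s ^ (-ℋ)) α :=
        hasDerivAt_mul_const _
      have hcomp := hG.comp α hinner
      rw [hEq] at hcomp
      refine hcomp.congr_of_eventuallyEq ?_
      filter_upwards [Ioi_mem_nhds hα] with β hβ
      exact hVG β hβ s hs
    · exact div_pos hsH (mul_pos (by positivity) hE)

end

/-- Existence, uniqueness and basic properties of `v_α` (equations (2.9)–(2.12) of the paper). -/
theorem v_alpha_properties
    (n k l : ℕ) (hl1 : 1 ≤ l) (hlk : l < k) (hkn : k ≤ n)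
    (H h : ℝ) (hh : 0 ≤ h) (hHh : h < H)
    (V : ℝ → ℝ → ℝ) (hV : ∀ α : ℝ, 0 < α → IsVsol k l H h α (V α)) :
    ∀ α : ℝ, 0 < α →
      -- (1) existence and uniqueness of `v_α(s)`
      (∀ s : ℝ, 0 < s → ∃! v : ℝ, 1 < v ∧
        (v ^ (k - l) - 1) * v ^ (2 * calH k l H h * h) = α * s ^ (-calH k l H h)) ∧
      -- (2) differentiability and the derivative identity; in particular `v_α' < 0`
      (∀ s : ℝ, 0 < s → ∃ d : ℝ, HasDerivAt (V α) d s ∧ d < 0 ∧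
        d / V α s * (H * V α s ^ (2 * calH k l H h * H) - h * V α s ^ (2 * calH k l H h * h)) =
          -(α / (2 * s ^ (1 + calH k l H h)))) ∧
      -- (3) `v_α(s) → 1` and `v_α(s) − 1 = O(s^{−ℋ})` as `s → ∞`
      (Tendsto (V α) atTop (nhds 1) ∧
        ∃ C S : ℝ, 0 < C ∧ 0 < S ∧ ∀ s : ℝ, S ≤ s →
          |V α s - 1| ≤ C * s ^ (-calH k l H h)) ∧
      -- (4) strict monotonicity in `α` and the formula for `∂v_α/∂α`
      (∀ s : ℝ, 0 < s →
        StrictMonoOn (fun α' => V α' s) (Set.Ioi (0 : ℝ)) ∧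
        HasDerivAt (fun α' => V α' s)
          (s ^ (-calH k l H h) /
            (2 * calH k l H h *
              (H * V α s ^ (2 * calH k l H h * H - 1) -
                h * V α s ^ (2 * calH k l H h * h - 1)))) α ∧
        0 < s ^ (-calH k l H h) /
          (2 * calH k l H h *
            (H * V α s ^ (2 * calH k l H h * H - 1) -
              h * V α s ^ (2 * calH k l H h * h - 1)))) := by
  intro α hα
  exact v_aux k l hlk H h (calH k l H h) hh hHh rfl V (fun β hβ => hV β hβ) α hα
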